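/- Under Assumptions (A) and (B), the expected terminal objective under the Gibbs law converges to the global minimum value: ∫_{ℝ^d} f(y) π_λ(y) dy → f_* as λ ↓ 0. -/

import Mathlib

open MeasureTheory Real Filter Topology
open scoped RealInnerProductSpace

noncomputable section

/-- The heat kernel with diffusivity `β`: `G_r(z) = (4πβr)^(−d/2) exp(−‖z‖²/(4βr))`. -/
def heatK {d : ℕ} (β r : ℝ) (z : EuclideanSpace ℝ (Fin d)) : ℝ :=
  (4 * π * β * r) ^ (-(d : ℝ) / 2) * Real.exp (-‖z‖ ^ 2 / (4 * β * r))

/-- The Laplacian of a scalar function on `ℝ^d`. -/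
def lap {d : ℕ} (g : EuclideanSpace ℝ (Fin d) → ℝ) (x : EuclideanSpace ℝ (Fin d)) : ℝ :=
  ∑ i : Fin d,
    fderiv ℝ (fun z => fderiv ℝ g z (EuclideanSpace.single i 1)) x (EuclideanSpace.single i 1)

/-- The normalized Gibbs density `π_λ(y) = e^{−α_λ f(y)} / M_λ`, with `α_λ = T/(2λβ)`. -/
def gibbsDen {d : ℕ} (T β lam : ℝ) (f : EuclideanSpace ℝ (Fin d) → ℝ)
    (y : EuclideanSpace ℝ (Fin d)) : ℝ :=
  Real.exp (-(T / (2 * lam * β)) * f y) / ∫ z, Real.exp (-(T / (2 * lam * β)) * f z)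

/-- `h_λ(t,x) = ∫ G_{T−t}(x−y) π_λ(y) dy`. -/
def hHC {d : ℕ} (T β lam : ℝ) (f : EuclideanSpace ℝ (Fin d) → ℝ) (t : ℝ)
    (x : EuclideanSpace ℝ (Fin d)) : ℝ :=
  ∫ y, heatK β (T - t) (x - y) * gibbsDen T β lam f y

/-- The conditional terminal density `η_{λ,t,x}(y) = G_{T−t}(x−y) π_λ(y) / h_λ(t,x)`. -/
def etaHC {d : ℕ} (T β lam : ℝ) (f : EuclideanSpace ℝ (Fin d) → ℝ) (t : ℝ)
    (x y : EuclideanSpace ℝ (Fin d)) : ℝ :=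
  heatK β (T - t) (x - y) * gibbsDen T β lam f y / hHC T β lam f t x

/-- The barycenter `a_λ(t,x) = ∫ y η_{λ,t,x}(y) dy`. -/
def aHC {d : ℕ} (T β lam : ℝ) (f : EuclideanSpace ℝ (Fin d) → ℝ) (t : ℝ)
    (x : EuclideanSpace ℝ (Fin d)) : EuclideanSpace ℝ (Fin d) :=
  ∫ y, etaHC T β lam f t x y • y

/-- The optimal drift `u*_λ(t,x) = 2β ∇_x log h_λ(t,x)`. -/
def uHC {d : ℕ} (T β lam : ℝ) (f : EuclideanSpace ℝ (Fin d) → ℝ) (t : ℝ)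
    (x : EuclideanSpace ℝ (Fin d)) : EuclideanSpace ℝ (Fin d) :=
  (2 * β) • gradient (fun z => Real.log (hHC T β lam f t z)) x

/-- The potential `Φ_λ(t,x) = −2β log h_λ(t,x)`. -/
def PhiHC {d : ℕ} (T β lam : ℝ) (f : EuclideanSpace ℝ (Fin d) → ℝ) (t : ℝ)
    (x : EuclideanSpace ℝ (Fin d)) : ℝ :=
  -(2 * β) * Real.log (hHC T β lam f t x)

/-- The value function `V_λ(t,x) = −(2λβ/T) log h_λ(t,x) − (2λβ/T) log M_λ`. -/
def VHC {d : ℕ} (T β lam : ℝ) (f : EuclideanSpace ℝ (Fin d) → ℝ) (t : ℝ)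
    (x : EuclideanSpace ℝ (Fin d)) : ℝ :=
  -(2 * lam * β / T) * Real.log (hHC T β lam f t x)
    - (2 * lam * β / T) * Real.log (∫ z, Real.exp (-(T / (2 * lam * β)) * f z))

private lemma mul_exp_neg_le {a : ℝ} (ha : 0 < a) {s : ℝ} (hs : 0 ≤ s) :
    s * Real.exp (-(a * s)) ≤ 1 / a := by
  have h : a * s ≤ Real.exp (a * s) :=
    le_trans (le_add_of_nonneg_right one_pos.le) (Real.add_one_le_exp _)
  rw [le_div_iff₀ ha]
  calc s * Real.exp (-(a * s)) * a = (a * s) * Real.exp (-(a * s)) := by ring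
    _ ≤ Real.exp (a * s) * Real.exp (-(a * s)) :=
        mul_le_mul_of_nonneg_right h (Real.exp_pos _).le
    _ = 1 := by rw [← Real.exp_add]; simp

private lemma tail_pt {ε' : ℝ} (hε' : 0 < ε') {c s : ℝ} (hc : 2 ≤ c) (hs : ε' ≤ s) :
    s * Real.exp (-(c * s)) ≤ Real.exp ((2 - c) * ε' - s) := by
  have hs0 : 0 ≤ s := le_trans hε'.le hs
  have h1 : s * Real.exp (-(1 * s)) ≤ 1 := by
    have := mul_exp_neg_le one_pos hs0
    simpa using this
  have h2 : Real.exp (-((c - 2) * s)) ≤ Real.exp (-((c - 2) * ε')) := by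
    apply Real.exp_le_exp.2
    apply neg_le_neg
    exact mul_le_mul_of_nonneg_left hs (by linarith)
  calc s * Real.exp (-(c * s))
      = (s * Real.exp (-(1 * s))) * Real.exp (-((c - 2) * s)) * Real.exp (-s) := by
        rw [mul_assoc, mul_assoc, ← Real.exp_add, ← Real.exp_add]; ring_nf
    _ ≤ 1 * Real.exp (-((c - 2) * ε')) * Real.exp (-s) := by
        gcongr
    _ = Real.exp ((2 - c) * ε' - s) := by rw [one_mul, ← Real.exp_add]; ring_nf

private lemma aux_int {d : ℕ} (f : EuclideanSpace ℝ (Fin d) → ℝ) (hfc : Continuous f)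
    (m : ℝ) (hmin : ∀ y, m ≤ f y) {c : ℝ} (hc : 0 < c)
    (hI : Integrable (fun y => Real.exp (-(c / 2) * f y))) :
    Integrable (fun y : EuclideanSpace ℝ (Fin d) => (f y - m) * Real.exp (-c * f y)) := by
  apply Integrable.mono' ((hI.const_mul (2 / c * Real.exp (-(c / 2) * m))))
  · exact (by fun_prop : Continuous fun y => (f y - m) * Real.exp (-c * f y)).aestronglyMeasurable
  · filter_upwards with y
    have hy : 0 ≤ f y - m := sub_nonneg.2 (hmin y)
    rw [Real.norm_eq_abs, abs_of_nonneg (mul_nonneg hy (Real.exp_pos _).le)]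
    have h1 : (f y - m) * Real.exp (-(c / 2 * (f y - m))) ≤ 2 / c := by
      have := mul_exp_neg_le (half_pos hc) hy
      rwa [one_div_div] at this
    calc (f y - m) * Real.exp (-c * f y)
        = ((f y - m) * Real.exp (-(c / 2 * (f y - m)))) *
            (Real.exp (-(c / 2) * m) * Real.exp (-(c / 2) * f y)) := by
          rw [mul_assoc, ← Real.exp_add, ← Real.exp_add]; ring_nf
      _ ≤ (2 / c) * (Real.exp (-(c / 2) * m) * Real.exp (-(c / 2) * f y)) := by
          apply mul_le_mul_of_nonneg_right h1 (by positivity)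
      _ = 2 / c * Real.exp (-(c / 2) * m) * Real.exp (-(c / 2) * f y) := by ring

private lemma exp_int_pos {d : ℕ} (f : EuclideanSpace ℝ (Fin d) → ℝ) (c : ℝ)
    (hI : Integrable (fun y => Real.exp (-c * f y))) :
    0 < ∫ y : EuclideanSpace ℝ (Fin d), Real.exp (-c * f y) := by
  rw [integral_pos_iff_support_of_nonneg (fun y => (Real.exp_pos _).le) hI]
  have : Function.support (fun y : EuclideanSpace ℝ (Fin d) => Real.exp (-c * f y)) = Set.univ := by
    ext y; simp [Function.support, Real.exp_ne_zero]
  rw [this]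
  exact isOpen_univ.measure_pos _ ⟨0, trivial⟩

private lemma Jtend {d : ℕ} (f : EuclideanSpace ℝ (Fin d) → ℝ) (hfc : Continuous f)
    (xstar : EuclideanSpace ℝ (Fin d)) (hmin : ∀ y, f xstar ≤ f y)
    (hint : ∀ c > (0:ℝ), Integrable (fun y => Real.exp (-c * f y))) :
    Tendsto (fun c => (∫ y, (f y - f xstar) * Real.exp (-c * f y)) /
      ∫ y, Real.exp (-c * f y)) atTop (𝓝 0) := by
  set m := f xstar with hm
  rw [Metric.tendsto_nhds]
  intro ε hε
  set ε' := ε / 3 with hε'def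
  have hε' : 0 < ε' := by positivity
  -- ball around xstar where f < m + ε'/2
  have hopen : IsOpen {y : EuclideanSpace ℝ (Fin d) | f y < m + ε' / 2} :=
    isOpen_lt hfc continuous_const
  obtain ⟨r, hr, hball⟩ := Metric.isOpen_iff.1 hopen xstar (by simp; linarith)
  set v := (volume (Metric.ball xstar r)).toReal with hv_def
  have hv : 0 < v :=
    ENNReal.toReal_pos (Metric.measure_ball_pos volume xstar hr).ne' measure_ball_lt_top.ne
  set I₀ := ∫ y, Real.exp (-1 * f y) with hI₀def
  have hI₀int : Integrable (fun y => Real.exp (-1 * f y)) := hint 1 one_pos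
  have hI₀pos : 0 < I₀ := exp_int_pos f 1 hI₀int
  have hsmall : ∀ᶠ c in atTop,
      Real.exp (2 * ε' + m - c * (ε' / 2)) < ε' * v / I₀ := by
    have htb : Tendsto (fun c : ℝ => 2 * ε' + m - c * (ε' / 2)) atTop atBot := by
      have h1 : Tendsto (fun c : ℝ => c * (ε' / 2)) atTop atTop :=
        Tendsto.atTop_mul_const (by positivity) tendsto_id
      have h2 : Tendsto (fun c : ℝ => -(c * (ε' / 2))) atTop atBot :=
        tendsto_neg_atTop_atBot.comp h1
      have := tendsto_atBot_add_const_left atTop (2 * ε' + m) h2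
      simpa [sub_eq_add_neg] using this
    exact Tendsto.eventually_lt_const (by positivity)
      ((Real.tendsto_exp_atBot).comp htb)
  filter_upwards [hsmall, eventually_ge_atTop (2:ℝ)] with c hsm hc2
  have hc0 : (0:ℝ) < c := by linarith
  have hIc : Integrable (fun y => Real.exp (-c * f y)) := hint c hc0
  have hNc : Integrable (fun y => (f y - m) * Real.exp (-c * f y)) :=
    aux_int f hfc m hmin hc0 (hint (c / 2) (by positivity))
  set D := ∫ y, Real.exp (-c * f y) with hD_def
  set N := ∫ y, (f y - m) * Real.exp (-c * f y) with hN_def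
  -- lower bound on D
  have hDlb : Real.exp (-(c * (m + ε' / 2))) * v ≤ D := by
    have h1 : ∫ y in Metric.ball xstar r, Real.exp (-(c * (m + ε' / 2))) ≤
        ∫ y in Metric.ball xstar r, Real.exp (-c * f y) := by
      apply setIntegral_mono_on
      · exact integrableOn_const measure_ball_lt_top.ne
      · exact hIc.integrableOn
      · exact measurableSet_ball
      · intro y hy
        have := hball hy
        simp only [Set.mem_setOf_eq] at this
        apply Real.exp_le_exp.2
        nlinarith
    have h2 : ∫ y in Metric.ball xstar r, Real.exp (-c * f y) ≤ D :=
      setIntegral_le_integral hIc (by filter_upwards with y using (Real.exp_pos _).le)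
    calc Real.exp (-(c * (m + ε' / 2))) * v
        = ∫ y in Metric.ball xstar r, Real.exp (-(c * (m + ε' / 2))) := by
          rw [setIntegral_const, smul_eq_mul, Measure.real]; ring
      _ ≤ D := le_trans h1 h2
  have hD0 : 0 < D := lt_of_lt_of_le (by positivity) hDlb
  set S := {y : EuclideanSpace ℝ (Fin d) | f y ≤ m + ε'} with hS_def
  have hS : MeasurableSet S := measurableSet_le hfc.measurable measurable_const
  have hb1 : ∫ y in S, (f y - m) * Real.exp (-c * f y) ≤ ε' * D := by
    calc ∫ y in S, (f y - m) * Real.exp (-c * f y)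
        ≤ ∫ y in S, ε' * Real.exp (-c * f y) := by
          apply setIntegral_mono_on hNc.integrableOn (hIc.const_mul ε').integrableOn hS
          intro y hy
          have : f y ≤ m + ε' := hy
          exact mul_le_mul_of_nonneg_right (by linarith) (Real.exp_pos _).le
      _ = ε' * ∫ y in S, Real.exp (-c * f y) := integral_const_mul _ _
      _ ≤ ε' * D := mul_le_mul_of_nonneg_left
          (setIntegral_le_integral hIc (by filter_upwards with y using (Real.exp_pos _).le))
          hε'.le
  have hb2 : ∫ y in Sᶜ, (f y - m) * Real.exp (-c * f y) ≤ ε' * D := by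
    set K := Real.exp ((2 - c) * ε' + (1 - c) * m) with hK_def
    have hstep : ∫ y in Sᶜ, (f y - m) * Real.exp (-c * f y) ≤
        ∫ y in Sᶜ, K * Real.exp (-1 * f y) := by
      apply setIntegral_mono_on hNc.integrableOn (hI₀int.const_mul K).integrableOn hS.compl
      intro y hy
      have hy' : m + ε' < f y := by
        simpa [hS_def, not_le] using hy
      have hgs : ε' ≤ f y - m := by linarith
      have h1 : (f y - m) * Real.exp (-(c * (f y - m))) ≤
          Real.exp ((2 - c) * ε' - (f y - m)) := tail_pt hε' hc2 hgs
      calc (f y - m) * Real.exp (-c * f y)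
          = ((f y - m) * Real.exp (-(c * (f y - m)))) * Real.exp (-(c * m)) := by
            rw [mul_assoc, ← Real.exp_add]; ring_nf
        _ ≤ Real.exp ((2 - c) * ε' - (f y - m)) * Real.exp (-(c * m)) :=
            mul_le_mul_of_nonneg_right h1 (Real.exp_pos _).le
        _ = K * Real.exp (-1 * f y) := by
            rw [hK_def, ← Real.exp_add, ← Real.exp_add]; ring_nf
    have hstep2 : ∫ y in Sᶜ, K * Real.exp (-1 * f y) ≤ K * I₀ := by
      rw [integral_const_mul]
      exact mul_le_mul_of_nonneg_left
        (setIntegral_le_integral hI₀int (by filter_upwards with y using (Real.exp_pos _).le))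
        (Real.exp_pos _).le
    have hstep3 : K * I₀ ≤ ε' * D := by
      have h1 : Real.exp (2 * ε' + m - c * (ε' / 2)) * I₀ ≤ ε' * v :=
        ((lt_div_iff₀ hI₀pos).1 hsm).le
      have hexp : K = Real.exp (2 * ε' + m - c * (ε' / 2)) *
          Real.exp (-(c * (m + ε' / 2))) := by
        rw [hK_def, ← Real.exp_add]
        congr 1
        ring
      have hKeq : K * I₀ =
          (Real.exp (2 * ε' + m - c * (ε' / 2)) * I₀) * Real.exp (-(c * (m + ε' / 2))) := by
        rw [hexp]; ring
      rw [hKeq]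
      calc (Real.exp (2 * ε' + m - c * (ε' / 2)) * I₀) * Real.exp (-(c * (m + ε' / 2)))
          ≤ (ε' * v) * Real.exp (-(c * (m + ε' / 2))) :=
            mul_le_mul_of_nonneg_right h1 (Real.exp_pos _).le
        _ = ε' * (Real.exp (-(c * (m + ε' / 2))) * v) := by ring
        _ ≤ ε' * D := mul_le_mul_of_nonneg_left hDlb hε'.le
    exact le_trans hstep (le_trans hstep2 hstep3)
  have hNsplit : N = (∫ y in S, (f y - m) * Real.exp (-c * f y)) +
      ∫ y in Sᶜ, (f y - m) * Real.exp (-c * f y) := (integral_add_compl hS hNc).symm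
  have hNle : N ≤ 2 * ε' * D := by rw [hNsplit]; linarith
  have hN0 : 0 ≤ N :=
    integral_nonneg fun y => mul_nonneg (sub_nonneg.2 (hmin y)) (Real.exp_pos _).le
  rw [Real.dist_eq, sub_zero, abs_of_nonneg (div_nonneg hN0 hD0.le)]
  rw [div_lt_iff₀ hD0]
  nlinarith

theorem expected_terminal_objective (d : ℕ) (hd : 1 ≤ d) (T β : ℝ)
    (hT : 0 < T) (hβ : 0 < β)
    (f : EuclideanSpace ℝ (Fin d) → ℝ)
    (hf : ContDiff ℝ 2 f)
    (hbdd : BddBelow (Set.range f))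
    (hcoer : Tendsto f (cocompact (EuclideanSpace ℝ (Fin d))) atTop)
    (hint : ∀ c > 0,
      Integrable (fun y => Real.exp (-c * f y)) ∧
      Integrable (fun y => ‖gradient f y‖ * Real.exp (-c * f y)) ∧
      Integrable (fun y => ‖iteratedFDeriv ℝ 2 f y‖ * Real.exp (-c * f y)))
    (xstar : EuclideanSpace ℝ (Fin d))
    (hmin : ∀ y, f xstar ≤ f y)
    (huniq : ∀ y, f y = f xstar → y = xstar) :
    Tendsto (fun lam : ℝ => ∫ y, f y * gibbsDen T β lam f y) (𝓝[>] 0) (𝓝 (f xstar)) := by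
  simp only [gibbsDen]
  have hfc : Continuous f := hf.continuous
  set m := f xstar with hm
  have hJ := Jtend f hfc xstar hmin (fun c hc => (hint c hc).1)
  have hα : Tendsto (fun lam : ℝ => T / (2 * lam * β)) (𝓝[>] (0:ℝ)) atTop := by
    have h1 : Tendsto (fun lam : ℝ => lam⁻¹) (𝓝[>] (0:ℝ)) atTop := tendsto_inv_nhdsGT_zero
    have h2 := h1.const_mul_atTop (show (0:ℝ) < T / (2 * β) by positivity)
    refine h2.congr fun lam => ?_
    rw [← div_eq_mul_inv, div_div]
    congr 1
    ring
  have key : Tendsto (fun lam : ℝ => m +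
      (∫ y, (f y - m) * Real.exp (-(T / (2 * lam * β)) * f y)) /
        ∫ y, Real.exp (-(T / (2 * lam * β)) * f y)) (𝓝[>] (0:ℝ)) (𝓝 (m + 0)) :=
    tendsto_const_nhds.add (hJ.comp hα)
  rw [add_zero] at key
  refine key.congr' ?_
  filter_upwards [self_mem_nhdsWithin] with lam hlam
  have hlam0 : (0:ℝ) < lam := hlam
  set c := T / (2 * lam * β) with hc_def
  have hc : 0 < c := by positivity
  have hIc : Integrable (fun y => Real.exp (-c * f y)) := (hint c hc).1
  have hNc : Integrable (fun y => (f y - m) * Real.exp (-c * f y)) :=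
    aux_int f hfc m hmin hc (hint (c / 2) (by positivity)).1
  have hM : 0 < ∫ z, Real.exp (-c * f z) := exp_int_pos f c hIc
  set M := ∫ z, Real.exp (-c * f z) with hM_def
  have hnum : ∫ y, f y * Real.exp (-c * f y) =
      (∫ y, (f y - m) * Real.exp (-c * f y)) + m * M := by
    have heq : (fun y => f y * Real.exp (-c * f y)) =
        fun y => (f y - m) * Real.exp (-c * f y) + m * Real.exp (-c * f y) := by
      funext y; ring
    rw [heq, integral_add hNc (hIc.const_mul m), integral_const_mul]
  calc m + (∫ y, (f y - m) * Real.exp (-c * f y)) / M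
      = ((∫ y, (f y - m) * Real.exp (-c * f y)) + m * M) / M := by
        rw [add_div, mul_div_cancel_right₀ _ hM.ne']; ring
    _ = (∫ y, f y * Real.exp (-c * f y)) / M := by rw [hnum]
    _ = ∫ y, f y * Real.exp (-c * f y) / M := (integral_div M _).symm
    _ = ∫ y, f y * (Real.exp (-c * f y) / M) := by
        congr 1; funext y; ring
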